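/- Let A be a real n×n matrix having a root λ ∈ ℂ of its characteristic polynomial with |λ| = 1, and let M be any symmetric real n×n matrix. Then AᵀMA − M is not positive definite. -/

import Mathlib

open Matrix

theorem stmt8 (n : ℕ) (A M : Matrix (Fin n) (Fin n) ℝ)
    (hA : ∃ μ : ℂ, (A.map (algebraMap ℝ ℂ)).charpoly.IsRoot μ ∧ ‖μ‖ = 1)
    (hM : M.IsSymm) :
    ¬ (Aᵀ * M * A - M).PosDef := by
  intro hPD
  obtain ⟨μ, hroot, habs⟩ := hA
  set A' : Matrix (Fin n) (Fin n) ℂ := A.map (algebraMap ℝ ℂ) with hA'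
  set M' : Matrix (Fin n) (Fin n) ℂ := M.map (algebraMap ℝ ℂ) with hM'
  -- the matrix μ•1 - A' is singular
  have hdet : (Matrix.diagonal (fun _ : Fin n => μ) - A').det = 0 := by
    have h1 : Polynomial.eval μ A'.charpoly = 0 := hroot
    rw [Matrix.charpoly] at h1
    have h2 : (Polynomial.evalRingHom μ) (A'.charmatrix.det) = 0 := h1
    rw [RingHom.map_det] at h2
    convert h2 using 2
    ext i j
    by_cases h : i = j <;>
      simp [h, Matrix.charmatrix_apply, Matrix.diagonal, Matrix.sub_apply]
  obtain ⟨v, hv0, hv⟩ := (Matrix.exists_mulVec_eq_zero_iff).mpr hdet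
  have hAv : A' *ᵥ v = μ • v := by
    have := hv
    rw [Matrix.sub_mulVec, sub_eq_zero] at this
    rw [← this]
    ext i
    simp [Matrix.mulVec_diagonal]
  -- eigenvector gives zero quadratic form
  have key1 : star v ⬝ᵥ ((Aᵀ * M * A - M).map (algebraMap ℝ ℂ) *ᵥ v) = 0 := by
    have hmap : (Aᵀ * M * A - M).map (algebraMap ℝ ℂ) = A'ᵀ * M' * A' - M' := by
      rw [Matrix.map_sub _ (fun a b => map_sub (algebraMap ℝ ℂ) a b), Matrix.map_mul, Matrix.map_mul, hA', Matrix.transpose_map]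
    rw [hmap, Matrix.sub_mulVec, dotProduct_sub]
    have hstar : A' *ᵥ star v = star (A' *ᵥ v) := by
      ext i
      simp only [Matrix.mulVec, dotProduct, Pi.star_apply, star_sum]
      refine Finset.sum_congr rfl fun j _ => ?_
      simp [hA', Matrix.map_apply, RCLike.star_def, _root_.map_mul, Complex.conj_ofReal]
    have h1 : star v ⬝ᵥ ((A'ᵀ * M' * A') *ᵥ v)
        = (starRingEnd ℂ μ * μ) * (star v ⬝ᵥ (M' *ᵥ v)) := by
      rw [← Matrix.mulVec_mulVec, ← Matrix.mulVec_mulVec, Matrix.dotProduct_mulVec,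
        Matrix.vecMul_transpose, hstar, hAv]
      rw [star_smul, Matrix.mulVec_smul, smul_dotProduct, dotProduct_smul]
      simp [mul_assoc, RCLike.star_def]
    have hμ : starRingEnd ℂ μ * μ = 1 := by
      rw [mul_comm, Complex.mul_conj, ← Complex.sq_norm, habs]
      norm_num
    rw [h1, hμ, one_mul, sub_self]
  -- real and imaginary parts of v
  set x : Fin n → ℝ := fun i => (v i).re with hx
  set y : Fin n → ℝ := fun i => (v i).im with hy
  set B : Matrix (Fin n) (Fin n) ℝ := Aᵀ * M * A - M with hB
  have key2 : (star v ⬝ᵥ (B.map (algebraMap ℝ ℂ) *ᵥ v)).re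
      = x ⬝ᵥ (B *ᵥ x) + y ⬝ᵥ (B *ᵥ y) := by
    simp only [dotProduct, Matrix.mulVec, Matrix.map_apply, Pi.star_apply,
      Finset.mul_sum, Complex.re_sum, ← Finset.sum_add_distrib]
    refine Finset.sum_congr rfl fun i _ => Finset.sum_congr rfl fun j _ => ?_
    simp only [RCLike.star_def, Complex.coe_algebraMap, Complex.mul_re, Complex.mul_im,
      Complex.conj_re, Complex.conj_im, Complex.ofReal_re, Complex.ofReal_im, hx, hy]
    ring
  rw [key1] at key2
  simp only [Complex.zero_re] at key2
  -- positivity gives a contradiction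
  have hxy : x ≠ 0 ∨ y ≠ 0 := by
    by_contra h
    push_neg at h
    apply hv0
    ext i
    have h1 : x i = 0 := by rw [h.1]; rfl
    have h2 : y i = 0 := by rw [h.2]; rfl
    exact Complex.ext h1 h2
  have hnn : ∀ w : Fin n → ℝ, 0 ≤ w ⬝ᵥ (B *ᵥ w) := by
    intro w
    rcases eq_or_ne w 0 with h | h
    · simp [h]
    · exact le_of_lt (by simpa using hPD.dotProduct_mulVec_pos h)
  have hpos : 0 < x ⬝ᵥ (B *ᵥ x) + y ⬝ᵥ (B *ᵥ y) := by
    rcases hxy with h | h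
    · have := hPD.dotProduct_mulVec_pos h
      simp only [star_trivial] at this
      linarith [hnn y]
    · have := hPD.dotProduct_mulVec_pos h
      simp only [star_trivial] at this
      linarith [hnn x]
  rw [← key2] at hpos
  exact lt_irrefl _ hpos
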